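/- Let n = 2^(2^ν) + 1 be prime with ν ≥ 2, assume that 2 and 3 together generate the group of units of ZMod n, put ng = 2^(2^ν − (ν+1)) and let ζ = exp(2πi/n). For a positive integer M dividing ng and 1 ≤ j ≤ M define the period F(j, M) = Σ_{t=0}^{ng/M − 1} Σ_{i=0}^{2^(ν+1) − 1} ζ^(3^(j−1+tM) · 2^i). Define ρ(a,b) = b if b divides a, and the remainder of a divided by b otherwise. Then for every m with 2^(m+1) dividing ng there exist integers μ(1), ..., μ(2^m) such that for every j with 1 ≤ j ≤ 2^m one has F(j, 2^(m+1)) · F(j + 2^m, 2^(m+1)) = Σ_{k=1}^{2^m} μ(k) · F(ρ(k + j − 1, 2^m), 2^m). -/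

import Mathlib

/-- `ρ(a, b) = b` if `b ∣ a`, and the remainder of `a` divided by `b` otherwise. -/
def rho (a b : ℕ) : ℕ := if b ∣ a then b else a % b

/-- The Gaussian period `F(j, M)`: the sum of `ζ ^ (3 ^ (j - 1 + t * M) * 2 ^ i)` for
`0 ≤ t < ng / M` and `0 ≤ i < 2 ^ (ν + 1)`, where `ζ = exp (2 π i / n)`. -/
noncomputable def per (n ν ng j M : ℕ) : ℂ :=
  ∑ t ∈ Finset.range (ng / M), ∑ i ∈ Finset.range (2 ^ (ν + 1)),
    Complex.exp (2 * Real.pi * Complex.I / n) ^ (3 ^ (j - 1 + t * M) * 2 ^ i)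

namespace Stmt7


noncomputable def ze (n : ℕ) : ℂ := Complex.exp (2 * Real.pi * Complex.I / n)

lemma ze_pow_n {n : ℕ} (hn : n ≠ 0) : ze n ^ n = 1 := by
  have h : (n : ℂ) * (2 * Real.pi * Complex.I / n) = 2 * Real.pi * Complex.I := by
    have : (n : ℂ) ≠ 0 := Nat.cast_ne_zero.mpr hn
    field_simp
  rw [ze, ← Complex.exp_nat_mul, h, Complex.exp_two_pi_mul_I]

lemma ze_pow_congr {n : ℕ} (hn : n ≠ 0) {a b : ℕ} (h : a ≡ b [MOD n]) :
    ze n ^ a = ze n ^ b := by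
  have key : ∀ c : ℕ, ze n ^ c = ze n ^ (c % n) := by
    intro c
    conv_lhs => rw [← Nat.mod_add_div c n]
    rw [pow_add, pow_mul, ze_pow_n hn, one_pow, mul_one]
  rw [key a, key b]
  simp only [Nat.ModEq] at h
  rw [h]

noncomputable def Fc (n : ℕ) (x : ZMod n) : ℂ := ze n ^ x.val

lemma Fc_natCast {n : ℕ} (hn : n ≠ 0) (N : ℕ) : Fc n (N : ZMod n) = ze n ^ N := by
  haveI : NeZero n := ⟨hn⟩
  rw [Fc, ZMod.val_natCast]
  exact ze_pow_congr hn (Nat.mod_modEq N n)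

lemma Fc_add {n : ℕ} (hn : n ≠ 0) (x y : ZMod n) : Fc n (x + y) = Fc n x * Fc n y := by
  haveI : NeZero n := ⟨hn⟩
  rw [Fc, Fc, Fc, ← pow_add, ZMod.val_add]
  exact ze_pow_congr hn (Nat.mod_modEq _ n)

noncomputable def gf (n e : ℕ) : ℂ := Fc n ((3 : ZMod n) ^ e)

lemma pow3_mod {n : ℕ} (h3 : (3:ZMod n)^(n-1) = 1) (c : ℕ) :
    (3 : ZMod n) ^ c = 3 ^ (c % (n-1)) := by
  conv_lhs => rw [← Nat.mod_add_div c (n-1)]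
  rw [pow_add, pow_mul, h3, one_pow, mul_one]

lemma gf_congr {n : ℕ} (h3 : (3:ZMod n)^(n-1) = 1) {a b : ℕ} (h : a ≡ b [MOD n-1]) :
    gf n a = gf n b := by
  unfold gf
  rw [pow3_mod h3 a, pow3_mod h3 b]
  simp only [Nat.ModEq] at h
  rw [h]

noncomputable def Qp (n M c : ℕ) : ℂ := ∑ r ∈ Finset.range ((n-1)/M), gf n (c + r * M)

lemma Qp_add_M {n M : ℕ} (h3 : (3:ZMod n)^(n-1) = 1) (hn : 1 < n) (hM : M ∣ n - 1)
    (hM0 : 0 < M) (c : ℕ) : Qp n M (c + M) = Qp n M c := by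
  set R := (n-1)/M with hR
  have hRM : R * M = n - 1 := Nat.div_mul_cancel hM
  have hR0 : 0 < R := by
    rcases Nat.eq_zero_or_pos R with h | h
    · rw [h, zero_mul] at hRM; omega
    · exact h
  unfold Qp
  rw [← hR]
  refine Finset.sum_nbij' (fun r => (r+1) % R) (fun r => (r + (R-1)) % R) ?_ ?_ ?_ ?_ ?_
  · intro a _; exact Finset.mem_range.mpr (Nat.mod_lt _ hR0)
  · intro a _; exact Finset.mem_range.mpr (Nat.mod_lt _ hR0)
  · intro a ha
    show ((a+1) % R + (R-1)) % R = a
    rw [Nat.mod_add_mod]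
    have h1 : a + 1 + (R - 1) = a + R := by omega
    rw [h1, Nat.add_mod_right, Nat.mod_eq_of_lt (Finset.mem_range.mp ha)]
  · intro a ha
    show ((a + (R-1)) % R + 1) % R = a
    rw [Nat.mod_add_mod]
    have h1 : a + (R - 1) + 1 = a + R := by omega
    rw [h1, Nat.add_mod_right, Nat.mod_eq_of_lt (Finset.mem_range.mp ha)]
  · intro a _
    show gf n (c + M + a * M) = gf n (c + ((a+1) % R) * M)
    apply gf_congr h3
    have h1 : ((a+1) % R) * M ≡ (a+1) * M [MOD n-1] := by
      rw [← hRM]; exact (Nat.mod_modEq (a+1) R).mul_right' M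
    have h2 : c + ((a+1) % R) * M ≡ c + (a+1) * M [MOD n-1] := h1.add_left c
    have h3' : c + (a+1) * M = c + M + a * M := by ring
    rw [h3'] at h2
    exact h2.symm

lemma Qp_add_mul {n M : ℕ} (h3 : (3:ZMod n)^(n-1) = 1) (hn : 1 < n) (hM : M ∣ n - 1)
    (hM0 : 0 < M) (c t : ℕ) : Qp n M (c + M * t) = Qp n M c := by
  induction t with
  | zero => simp
  | succ t ih =>
      have : c + M * (t+1) = (c + M * t) + M := by ring
      rw [this, Qp_add_M h3 hn hM hM0, ih]

lemma per_eq_Qp (n ν ng M s u j : ℕ) (hn : 1 < n) (h3 : (3:ZMod n)^(n-1) = 1)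
    (h2 : (3:ZMod n)^s = 2) (hsu : s = ng * u) (hun : Nat.Coprime u (2^(ν+1)))
    (hn1 : n - 1 = ng * 2^(ν+1)) (hM : M ∣ ng) (hM0 : 0 < M) :
    per n ν ng j M = Qp n M (j - 1) := by
  have hn0 : n ≠ 0 := by omega
  have hn1pos : 0 < n - 1 := by omega
  have hng0 : 0 < ng := by
    rcases Nat.eq_zero_or_pos ng with h | h
    · rw [h, zero_mul] at hn1; omega
    · exact h
  have hMs : M ∣ s := by rw [hsu]; exact hM.mul_right u
  have hMn1 : M ∣ n - 1 := by rw [hn1]; exact hM.mul_right _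
  have hngn1 : ng ∣ n - 1 := ⟨2^(ν+1), hn1⟩
  set c := j - 1 with hc
  set S := Finset.range (ng/M) ×ˢ Finset.range (2^(ν+1)) with hS
  set ψ : ℕ × ℕ → ℕ := fun p => (p.1 * M + p.2 * s) % (n-1) with hψ
  -- step 1: per as sum over S
  have hterm : ∀ t i : ℕ, Complex.exp (2*Real.pi*Complex.I/(n:ℂ)) ^ (3^(c + t*M) * 2^i)
      = gf n (c + (t*M + i*s)) := by
    intro t i
    have e1 : Complex.exp (2*Real.pi*Complex.I/(n:ℂ)) ^ (3^(c + t*M) * 2^i)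
        = Fc n (((3^(c + t*M) * 2^i : ℕ) : ZMod n)) := (Fc_natCast hn0 _).symm
    rw [e1]
    have e2 : ((3^(c + t*M) * 2^i : ℕ) : ZMod n) = (3:ZMod n)^(c+t*M) * (2:ZMod n)^i := by
      push_cast; ring
    rw [e2, ← h2, ← pow_mul, ← pow_add]
    unfold gf
    congr 1
    ring
  have hper : per n ν ng j M = ∑ p ∈ S, gf n (c + ψ p) := by
    rw [per, hS, Finset.sum_product]
    refine Finset.sum_congr rfl fun t _ => Finset.sum_congr rfl fun i _ => ?_
    rw [hterm t i]
    exact gf_congr h3 ((Nat.mod_modEq _ _).symm.add_left c)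
  -- injectivity of ψ on S
  have hinj : ∀ p ∈ S, ∀ q ∈ S, ψ p = ψ q → p = q := by
    rintro ⟨t1, i1⟩ hp ⟨t2, i2⟩ hq heq
    simp only [hS, Finset.mem_product, Finset.mem_range] at hp hq
    have hm : t1*M + i1*s ≡ t2*M + i2*s [MOD n-1] := heq
    have hd : ∀ i : ℕ, i * s ≡ 0 [MOD ng] :=
      fun i => Nat.modEq_zero_iff_dvd.mpr ⟨i*u, by rw [hsu]; ring⟩
    have hmg : t1*M + i1*s ≡ t2*M + i2*s [MOD ng] := hm.of_dvd hngn1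
    have h1' : t1*M + i1*s ≡ t1*M [MOD ng] := by simpa using (hd i1).add_left (t1*M)
    have h2' : t2*M + i2*s ≡ t2*M [MOD ng] := by simpa using (hd i2).add_left (t2*M)
    have htt : t1*M ≡ t2*M [MOD ng] := h1'.symm.trans (hmg.trans h2')
    have hb : ∀ t : ℕ, t < ng/M → t*M < ng := by
      intro t ht
      calc t*M < (ng/M)*M := (Nat.mul_lt_mul_right hM0).mpr ht
        _ = ng := Nat.div_mul_cancel hM
    have ht12 : t1 = t2 :=
      Nat.eq_of_mul_eq_mul_right hM0 (htt.eq_of_lt_of_lt (hb t1 hp.1) (hb t2 hq.1))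
    subst ht12
    have his : i1*s ≡ i2*s [MOD n-1] := Nat.ModEq.add_left_cancel (Nat.ModEq.refl _) hm
    have his' : (i1*u)*ng ≡ (i2*u)*ng [MOD 2^(ν+1) * ng] := by
      have e1 : ∀ i : ℕ, i * s = (i*u)*ng := by intro i; rw [hsu]; ring
      have e2 : n - 1 = 2^(ν+1) * ng := by rw [hn1]; ring
      rw [e1, e1, e2] at his
      exact his
    have hiu : i1*u ≡ i2*u [MOD 2^(ν+1)] :=
      Nat.ModEq.mul_right_cancel' (by omega) his'
    have hi12 : i1 ≡ i2 [MOD 2^(ν+1)] :=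
      Nat.ModEq.cancel_right_of_coprime (by simpa [Nat.Coprime] using hun.symm) hiu
    have : i1 = i2 := hi12.eq_of_lt_of_lt hp.2 hq.2
    simp [this]
  -- image identification
  have hcardS : S.card = ng/M * 2^(ν+1) := by simp [hS]
  have hdivM : (n-1)/M = ng/M * 2^(ν+1) := by
    obtain ⟨q, hq⟩ := hM
    rw [hn1, hq, Nat.mul_div_cancel_left _ hM0, mul_assoc, Nat.mul_div_cancel_left _ hM0]
  have himg : S.image ψ = (Finset.range ((n-1)/M)).image (fun r => r * M) := by
    apply Finset.eq_of_subset_of_card_le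
    · intro e he
      obtain ⟨p, hp, rfl⟩ := Finset.mem_image.mp he
      have h1 : M ∣ p.1*M + p.2*s := dvd_add (Dvd.intro_left p.1 rfl) (hMs.mul_left p.2)
      have hMe : M ∣ ψ p := (Nat.dvd_mod_iff hMn1).mpr h1
      have hlt : ψ p < n - 1 := Nat.mod_lt _ hn1pos
      obtain ⟨r, hr⟩ := hMe
      refine Finset.mem_image.mpr ⟨r, ?_, ?_⟩
      · refine Finset.mem_range.mpr ((Nat.lt_div_iff_mul_lt' hMn1 r).mpr ?_)
        rw [← hr]; exact hlt
      · rw [hr, mul_comm]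
    · rw [Finset.card_image_of_injective _ (mul_left_injective₀ hM0.ne'),
        Finset.card_range, Finset.card_image_of_injOn (fun p hp q hq => hinj p hp q hq),
        hcardS, hdivM]
  -- conclude
  rw [hper, ← Finset.sum_image (f := fun e => gf n (c + e)) hinj, himg,
    Finset.sum_image (fun x _ y _ h => mul_left_injective₀ hM0.ne' h)]
  rfl



lemma nu_pow (ν : ℕ) (h : 2 ≤ ν) : ν + 2 ≤ 2 ^ ν := by
  induction ν with
  | zero => omega
  | succ k ih =>
      rcases Nat.lt_or_ge k 2 with h' | h'
      · interval_cases k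
        · omega
        · norm_num
      · have := ih h'
        rw [pow_succ]
        omega

lemma setup (ν n ng : ℕ) (hν : 2 ≤ ν) (hn : n = 2 ^ (2 ^ ν) + 1) (hp : n.Prime)
    (hgen : Subgroup.closure {u : (ZMod n)ˣ | (u : ZMod n) = 2 ∨ (u : ZMod n) = 3} = ⊤)
    (hng : ng = 2 ^ (2 ^ ν - (ν + 1))) :
    ∃ s u : ℕ,
      (3:ZMod n)^(n-1) = 1 ∧
      (3:ZMod n)^s = 2 ∧
      s = ng * u ∧
      Nat.Coprime u (2^(ν+1)) ∧
      (∀ x : ZMod n, x ≠ 0 → ∃ e, e < n-1 ∧ (3:ZMod n)^e = x) ∧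
      (∀ e1 e2, e1 < n-1 → e2 < n-1 → (3:ZMod n)^e1 = (3:ZMod n)^e2 → e1 = e2) ∧
      (3:ZMod n)^((n-1)/2) = -1 := by
  haveI : Fact n.Prime := ⟨hp⟩
  have h2ν : 4 ≤ 2 ^ ν := by
    calc 4 = 2^2 := rfl
    _ ≤ 2^ν := Nat.pow_le_pow_right (by norm_num) hν
  have hn17 : 17 ≤ n := by
    have : (16:ℕ) = 2^4 := by norm_num
    have h4 : (2:ℕ)^4 ≤ 2^(2^ν) := Nat.pow_le_pow_right (by norm_num) h2ν
    omega
  haveI : Fact (2 < n) := ⟨by omega⟩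
  have hνlt : ν + 1 ≤ 2^ν - 1 := by have := nu_pow ν hν; omega
  have hn1 : n - 1 = ng * 2^(ν+1) := by
    rw [hn, hng, ← pow_add]
    have : 2^ν - (ν+1) + (ν+1) = 2^ν := by omega
    rw [this]
    omega
  -- units 2 and 3
  have h2ne : (2 : ZMod n) ≠ 0 := by
    have : ((2:ℕ) : ZMod n) ≠ 0 := by
      rw [Ne, ZMod.natCast_eq_zero_iff]
      intro h
      have := Nat.le_of_dvd (by norm_num) h
      omega
    simpa using this
  have h3ne : (3 : ZMod n) ≠ 0 := by
    have : ((3:ℕ) : ZMod n) ≠ 0 := by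
      rw [Ne, ZMod.natCast_eq_zero_iff]
      intro h
      have := Nat.le_of_dvd (by norm_num) h
      omega
    simpa using this
  have h2u : IsUnit (2 : ZMod n) := isUnit_iff_ne_zero.mpr h2ne
  have h3u : IsUnit (3 : ZMod n) := isUnit_iff_ne_zero.mpr h3ne
  set u2 := h2u.unit with hu2def
  set u3 := h3u.unit with hu3def
  have hu2 : (u2 : ZMod n) = 2 := h2u.unit_spec
  have hu3 : (u3 : ZMod n) = 3 := h3u.unit_spec
  have hcard : Fintype.card (ZMod n)ˣ = n - 1 := by
    rw [ZMod.card_units_eq_totient, Nat.totient_prime hp]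
  -- 2 ^ (2^ν) = -1 in ZMod n
  have h2pow : (2 : ZMod n) ^ (2^ν) = -1 := by
    have e1 : (2 : ZMod n) ^ (2^ν) = ((2^(2^ν) : ℕ) : ZMod n) := by push_cast; ring
    have e2 : (2:ℕ)^(2^ν) = n - 1 := by omega
    rw [e1, e2]
    have : ((n - 1 : ℕ) : ZMod n) = (n : ZMod n) - 1 := by
      have : (1:ℕ) ≤ n := by omega
      push_cast [Nat.cast_sub this]
      ring
    rw [this, ZMod.natCast_self]
    ring
  have hne11 : (-1 : ZMod n) ≠ 1 := ZMod.neg_one_ne_one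
  -- order of u2
  have h2powone : u2 ^ (2^(ν+1)) = 1 := by
    apply Units.ext
    push_cast [hu2]
    rw [pow_succ, pow_mul, h2pow]
    ring
  have h2powne : u2 ^ (2^ν) ≠ 1 := by
    intro h
    apply hne11
    have := congrArg (Units.val) h
    push_cast [hu2] at this
    rw [h2pow] at this
    exact this
  have hord2dvd : orderOf u2 ∣ 2^(ν+1) := orderOf_dvd_of_pow_eq_one h2powone
  have hord2 : orderOf u2 = 2^(ν+1) := by
    obtain ⟨k, hk, hke⟩ := (Nat.dvd_prime_pow Nat.prime_two).mp hord2dvd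
    rcases Nat.lt_or_ge k (ν+1) with h' | h'
    · exfalso
      apply h2powne
      have : 2^ν = 2^k * 2^(ν-k) := by rw [← pow_add]; congr 1; omega
      rw [this, pow_mul, ← hke, pow_orderOf_eq_one, one_pow]
    · have : k = ν + 1 := by omega
      rw [hke, this]
  -- order of u3 is n - 1
  have hord3dvd : orderOf u3 ∣ n - 1 := by
    rw [← hcard]; exact orderOf_dvd_card
  have hE : ν + 1 ≤ 2^ν - 1 := hνlt
  have hord3 : orderOf u3 = n - 1 := by
    have hne1 : n - 1 = 2^(2^ν) := by omega
    have hdvd2 : orderOf u3 ∣ 2^(2^ν) := by rw [← hne1]; exact hord3dvd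
    obtain ⟨k, hk, hke⟩ := (Nat.dvd_prime_pow Nat.prime_two).mp hdvd2
    rcases Nat.lt_or_ge k (2^ν) with h' | h'
    · -- contradiction: everything killed by E := 2^(2^ν - 1)
      exfalso
      set E := 2^(2^ν - 1) with hEdef
      have hu2E : u2 ^ E = 1 := by
        apply orderOf_dvd_iff_pow_eq_one.mp
        rw [hord2, hEdef]
        exact pow_dvd_pow 2 hE
      have hu3E : u3 ^ E = 1 := by
        apply orderOf_dvd_iff_pow_eq_one.mp
        rw [hke, hEdef]
        exact pow_dvd_pow 2 (by omega)
      obtain ⟨g, hg⟩ := IsCyclic.exists_generator (α := (ZMod n)ˣ)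
      have hgord : orderOf g = n - 1 := by
        rw [orderOf_eq_card_of_forall_mem_zpowers hg, Nat.card_eq_fintype_card, hcard]
      have hset : {u : (ZMod n)ˣ | (u : ZMod n) = 2 ∨ (u : ZMod n) = 3} = {u2, u3} := by
        ext u
        simp only [Set.mem_setOf_eq, Set.mem_insert_iff, Set.mem_singleton_iff]
        constructor
        · rintro (h | h)
          · left; apply Units.ext; rw [h, hu2]
          · right; apply Units.ext; rw [h, hu3]
        · rintro (rfl | rfl)
          · left; exact hu2
          · right; exact hu3
      have hgmem : g ∈ Subgroup.closure {u2, u3} := by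
        rw [← hset, hgen]; trivial
      obtain ⟨a, b, hab⟩ := Subgroup.mem_closure_pair.mp hgmem
      have hgE : g ^ E = 1 := by
        rw [← hab]
        rw [mul_pow, ← zpow_natCast (u2 ^ a), ← zpow_natCast (u3 ^ b),
          ← zpow_mul, ← zpow_mul, mul_comm a (E:ℤ), mul_comm b (E:ℤ),
          zpow_mul, zpow_mul, zpow_natCast, zpow_natCast, hu2E, hu3E]
        simp
      have : orderOf g ∣ E := orderOf_dvd_iff_pow_eq_one.mpr hgE
      rw [hgord, hne1] at this
      have hle := Nat.le_of_dvd (by positivity) this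
      have : (2:ℕ)^(2^ν - 1) < 2^(2^ν) := Nat.pow_lt_pow_right (by norm_num) (by omega)
      omega
    · have : k = 2^ν := by omega
      rw [hke, this, hne1]
  -- ZMod-level facts about powers of 3
  have hcoe3 : ∀ e : ℕ, ((u3 ^ e : (ZMod n)ˣ) : ZMod n) = (3:ZMod n)^e := by
    intro e; push_cast [hu3]; ring
  have h3n1 : (3:ZMod n)^(n-1) = 1 := by
    rw [← hcoe3, ← hord3, pow_orderOf_eq_one]
    rfl
  -- discrete log (at unit level)
  have htop : ∀ x : (ZMod n)ˣ, x ∈ Subgroup.zpowers u3 := by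
    have hc : Nat.card (Subgroup.zpowers u3) = Nat.card (ZMod n)ˣ := by
      rw [Nat.card_zpowers, hord3, Nat.card_eq_fintype_card, hcard]
    have := Subgroup.eq_top_of_card_eq _ hc
    intro x
    rw [this]
    trivial
  have hdlogU : ∀ x : (ZMod n)ˣ, ∃ e, e < n - 1 ∧ u3 ^ e = x := by
    intro x
    obtain ⟨k, hk⟩ := htop x
    have hpos : (0:ℤ) < ((n-1 : ℕ) : ℤ) := by
      have : (1:ℕ) ≤ n - 1 := by omega
      exact_mod_cast by omega
    set e : ℕ := (k % ((n-1 : ℕ) : ℤ)).toNat with he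
    have hge : (0:ℤ) ≤ k % ((n-1:ℕ) : ℤ) := Int.emod_nonneg k (by omega)
    have hecast : (e : ℤ) = k % ((n-1:ℕ):ℤ) := Int.toNat_of_nonneg hge
    have helt : e < n - 1 := by
      have := Int.emod_lt_of_pos k hpos
      omega
    refine ⟨e, helt, ?_⟩
    have hdvd : ((n-1:ℕ):ℤ) ∣ (e:ℤ) - k := by
      rw [hecast, Int.emod_def]
      exact ⟨-(k / ((n-1:ℕ):ℤ)), by ring⟩
    have h1 : u3 ^ ((e:ℤ) - k) = 1 := by
      apply orderOf_dvd_iff_zpow_eq_one.mp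
      rw [hord3]
      exact hdvd
    rw [zpow_sub] at h1
    have : u3 ^ (e:ℤ) = u3 ^ k := by
      have := mul_eq_one_iff_eq_inv.mp h1
      rw [this, inv_inv]
    rw [← zpow_natCast, this]
    simpa using hk
  have hdlog : ∀ x : ZMod n, x ≠ 0 → ∃ e, e < n-1 ∧ (3:ZMod n)^e = x := by
    intro x hx
    obtain ⟨e, he, hee⟩ := hdlogU (isUnit_iff_ne_zero.mpr hx).unit
    exact ⟨e, he, by rw [← hcoe3, hee, IsUnit.unit_spec]⟩
  have hinj : ∀ e1 e2, e1 < n-1 → e2 < n-1 → (3:ZMod n)^e1 = (3:ZMod n)^e2 → e1 = e2 := by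
    intro e1 e2 h1 h2 h
    have : u3 ^ e1 = u3 ^ e2 := by
      apply Units.ext
      rw [hcoe3, hcoe3]
      exact h
    exact pow_injOn_Iio_orderOf (by rw [hord3]; exact h1) (by rw [hord3]; exact h2) this
  -- 3 ^ ((n-1)/2) = -1
  have hhalf : (3:ZMod n)^((n-1)/2) = -1 := by
    have heven : (n-1)/2 * 2 = n - 1 := by
      have : n - 1 = 2^(2^ν) := by omega
      rw [this]
      have h1 : (2:ℕ)^(2^ν) = 2^(2^ν - 1) * 2 := by
        rw [← pow_succ]
        congr 1
        omega
      rw [h1]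
      rw [Nat.mul_div_cancel _ (by norm_num)]
    have hsq : ((3:ZMod n)^((n-1)/2)) * ((3:ZMod n)^((n-1)/2)) = 1 := by
      rw [← pow_add]
      have : (n-1)/2 + (n-1)/2 = n - 1 := by omega
      rw [this, h3n1]
    rcases mul_self_eq_one_iff.mp hsq with h | h
    · exfalso
      have : orderOf u3 ∣ (n-1)/2 := by
        apply orderOf_dvd_iff_pow_eq_one.mpr
        apply Units.ext
        rw [hcoe3, h]
        rfl
      rw [hord3] at this
      have := Nat.le_of_dvd (by omega) this
      omega
    · exact h
  -- discrete log of 2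
  obtain ⟨s, hslt, hs⟩ := hdlogU u2
  have hs2 : (3:ZMod n)^s = 2 := by rw [← hcoe3, hs, hu2]
  have hordpow : orderOf (u3 ^ s) = (n-1) / (n-1).gcd s := by
    rw [orderOf_pow, hord3]
  have hgcd : (n-1).gcd s = ng := by
    have h1 : orderOf (u3 ^ s) = 2^(ν+1) := by rw [hs, hord2]
    rw [hordpow] at h1
    have hdd : (n-1).gcd s ∣ n - 1 := Nat.gcd_dvd_left _ _
    have h2 : (n-1).gcd s * 2^(ν+1) = n - 1 := by
      rw [← h1, mul_comm]
      exact Nat.div_mul_cancel hdd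
    have hng0 : 0 < 2^(ν+1) := by positivity
    apply Nat.eq_of_mul_eq_mul_right hng0
    omega
  have hngs : ng ∣ s := by rw [← hgcd]; exact Nat.gcd_dvd_right _ _
  refine ⟨s, s / ng, h3n1, hs2, (Nat.mul_div_cancel' hngs).symm, ?_, hdlog, hinj, hhalf⟩
  have hng0 : 0 < ng := by
    rw [hng]; positivity
  have hgm : ng * Nat.gcd (2^(ν+1)) (s / ng) = ng := by
    have e1 : n - 1 = ng * 2^(ν+1) := hn1
    have e2 : s = ng * (s / ng) := (Nat.mul_div_cancel' hngs).symm
    calc ng * Nat.gcd (2^(ν+1)) (s / ng) = Nat.gcd (ng * 2^(ν+1)) (ng * (s/ng)) :=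
          (Nat.gcd_mul_left ng _ _).symm
      _ = (n-1).gcd s := by rw [← e1, ← e2]
      _ = ng := hgcd
  have h1 : ng * Nat.gcd (2^(ν+1)) (s / ng) = ng * 1 := by rw [hgm, mul_one]
  exact Nat.Coprime.symm (Nat.eq_of_mul_eq_mul_left hng0 h1)

end Stmt7

/-- For a Fermat prime `n = 2 ^ 2 ^ ν + 1` (`ν ≥ 2`) such that `2` and `3`
generate `(ZMod n)ˣ`, with `ng = 2 ^ (2 ^ ν - (ν + 1))`: for every `m` with `2 ^ (m + 1) ∣ ng`
there are integers `μ 1, …, μ (2 ^ m)` such that for all `1 ≤ j ≤ 2 ^ m`,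
`F(j, 2 ^ (m + 1)) * F(j + 2 ^ m, 2 ^ (m + 1)) = ∑ k, μ k * F(ρ(k + j - 1, 2 ^ m), 2 ^ m)`. -/
theorem stmt7 (ν n : ℕ) (hν : 2 ≤ ν) (hn : n = 2 ^ (2 ^ ν) + 1) (hp : n.Prime)
    (hgen : Subgroup.closure {u : (ZMod n)ˣ | (u : ZMod n) = 2 ∨ (u : ZMod n) = 3} = ⊤)
    (ng : ℕ) (hng : ng = 2 ^ (2 ^ ν - (ν + 1))) :
    ∀ m : ℕ, 2 ^ (m + 1) ∣ ng →
      ∃ μ : ℕ → ℤ, ∀ j : ℕ, 1 ≤ j → j ≤ 2 ^ m →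
        per n ν ng j (2 ^ (m + 1)) * per n ν ng (j + 2 ^ m) (2 ^ (m + 1)) =
          ∑ k ∈ Finset.Icc 1 (2 ^ m),
            (μ k : ℂ) * per n ν ng (rho (k + j - 1) (2 ^ m)) (2 ^ m) := by
  intro m hm
  obtain ⟨s, u, h3n1, hs2, hsu, hun, hdlog, hinj, hhalf⟩ :=
    Stmt7.setup ν n ng hν hn hp hgen hng
  have h2ν : 4 ≤ 2 ^ ν := by
    calc (4:ℕ) = 2^2 := rfl
    _ ≤ 2^ν := Nat.pow_le_pow_right (by norm_num) hν
  have hn17 : 17 ≤ n := by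
    have h4 : (2:ℕ)^4 ≤ 2^(2^ν) := Nat.pow_le_pow_right (by norm_num) h2ν
    have h5 : (2:ℕ)^4 = 16 := by norm_num
    omega
  have hνlt : ν + 1 ≤ 2^ν - 1 := by have := Stmt7.nu_pow ν hν; omega
  have hn1 : n - 1 = ng * 2^(ν+1) := by
    rw [hn, hng, ← pow_add]
    have h1 : 2^ν - (ν+1) + (ν+1) = 2^ν := by omega
    rw [h1]
    omega
  have hn1pos : 0 < n - 1 := by omega
  have hn2 : 1 < n := by omega
  set M := 2^m with hMdef
  set M' := 2^(m+1) with hM'def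
  have hM0 : 0 < M := by positivity
  have hM'0 : 0 < M' := by positivity
  have hMM' : M ∣ M' := pow_dvd_pow 2 (by omega)
  have hM'ng : M' ∣ ng := hm
  have hMng : M ∣ ng := hMM'.trans hM'ng
  have hng_n1 : ng ∣ n - 1 := ⟨2^(ν+1), hn1⟩
  have hM'n1 : M' ∣ n - 1 := hM'ng.trans hng_n1
  have hMn1 : M ∣ n - 1 := hMng.trans hng_n1
  have hM'M : M' = M * 2 := pow_succ 2 m
  have hhalfval : (n-1)/2 = ng * 2^ν := by
    rw [hn1, pow_succ, ← mul_assoc, Nat.mul_div_cancel _ (by norm_num)]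
  have hM'half : M' ∣ (n-1)/2 := by rw [hhalfval]; exact Dvd.dvd.mul_right hM'ng _
  set R' := (n-1)/M' with hR'def
  have hR'M' : R' * M' = n - 1 := Nat.div_mul_cancel hM'n1
  have hR'0 : 0 < R' := by
    rcases Nat.eq_zero_or_pos R' with h | h
    · rw [h, zero_mul] at hR'M'; omega
    · exact h
  set R := (n-1)/M with hRdef
  have hRM : R * M = n - 1 := Nat.div_mul_cancel hMn1
  have hR0 : 0 < R := by
    rcases Nat.eq_zero_or_pos R with h | h
    · rw [h, zero_mul] at hRM; omega
    · exact h
  -- the sums 3^(r*M') + 3^(M + r'*M') are nonzero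
  have hnz : ∀ r r' : ℕ, ((3:ZMod n)^(r*M') + (3:ZMod n)^(M + r'*M')) ≠ 0 := by
    intro r r' h0
    have hb : (3:ZMod n)^(M + r'*M') = -((3:ZMod n)^(r*M')) :=
      eq_neg_of_add_eq_zero_right h0
    have hkey : (3:ZMod n)^(r*M' + (n-1)/2) = (3:ZMod n)^(M + r'*M') := by
      rw [pow_add, hhalf, hb]
      ring
    have hcong := hinj ((r*M' + (n-1)/2) % (n-1)) ((M + r'*M') % (n-1))
      (Nat.mod_lt _ hn1pos) (Nat.mod_lt _ hn1pos)
      (by rw [← Stmt7.pow3_mod h3n1, ← Stmt7.pow3_mod h3n1, hkey])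
    have hmeq : r*M' + (n-1)/2 ≡ M + r'*M' [MOD n-1] := hcong
    have hmeq' : r*M' + (n-1)/2 ≡ M + r'*M' [MOD M'] := hmeq.of_dvd hM'n1
    have hd1 : M' ∣ r*M' + (n-1)/2 := dvd_add (Dvd.intro_left r rfl) hM'half
    have hd2 : M' ∣ M + r'*M' := by
      have h01 : r*M' + (n-1)/2 ≡ 0 [MOD M'] := Nat.modEq_zero_iff_dvd.mpr hd1
      exact Nat.modEq_zero_iff_dvd.mp (hmeq'.symm.trans h01)
    have hd4 : M' ∣ r' * M' := Dvd.intro_left r' rfl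
    have hd3 : M' ∣ M := (Nat.dvd_add_right hd4).mp (by rwa [add_comm] at hd2)
    have hle := Nat.le_of_dvd hM0 hd3
    have hlt : M < M' := by rw [hM'M]; omega
    omega
  -- discrete logarithm for each pair
  have hex : ∀ p : ℕ × ℕ, ∃ e, e < n-1 ∧
      (3:ZMod n)^e = 3^(p.1*M') + 3^(M + p.2*M') :=
    fun p => hdlog _ (hnz p.1 p.2)
  choose d hdlt hd using hex
  set S' := Finset.range R' ×ˢ Finset.range R' with hS'def
  set σf : ℕ × ℕ → ℕ × ℕ := fun p => ((p.2 + 1) % R', p.1) with hσdef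
  set τf : ℕ × ℕ → ℕ × ℕ := fun p => (p.2, (p.1 + (R'-1)) % R') with hτdef
  have hσmem : ∀ p ∈ S', σf p ∈ S' := by
    intro p hp
    simp only [hS'def, Finset.mem_product, Finset.mem_range] at hp ⊢
    exact ⟨Nat.mod_lt _ hR'0, hp.1⟩
  have hτmem : ∀ p ∈ S', τf p ∈ S' := by
    intro p hp
    simp only [hS'def, Finset.mem_product, Finset.mem_range] at hp ⊢
    exact ⟨hp.2, Nat.mod_lt _ hR'0⟩
  have hτσ : ∀ p ∈ S', τf (σf p) = p := by
    intro p hp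
    simp only [hS'def, Finset.mem_product, Finset.mem_range] at hp
    show (p.1, ((p.2 + 1) % R' + (R'-1)) % R') = p
    rw [Nat.mod_add_mod]
    have h1 : p.2 + 1 + (R' - 1) = p.2 + R' := by omega
    rw [h1, Nat.add_mod_right, Nat.mod_eq_of_lt hp.2]
  have hστ : ∀ p ∈ S', σf (τf p) = p := by
    intro p hp
    simp only [hS'def, Finset.mem_product, Finset.mem_range] at hp
    show (((p.1 + (R'-1)) % R' + 1) % R', p.2) = p
    rw [Nat.mod_add_mod]
    have h1 : p.1 + (R' - 1) + 1 = p.1 + R' := by omega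
    rw [h1, Nat.add_mod_right, Nat.mod_eq_of_lt hp.1]
  -- shift property of the discrete logarithm
  have hshift : ∀ p : ℕ × ℕ, d (σf p) = (d p + M) % (n-1) := by
    intro p
    apply hinj (d (σf p)) ((d p + M) % (n-1)) (hdlt _) (Nat.mod_lt _ hn1pos)
    rw [← Stmt7.pow3_mod h3n1 (d p + M), hd (σf p), pow_add (3 : ZMod n) (d p) M, hd p]
    show (3:ZMod n)^(((p.2+1) % R')*M') + 3^(M + p.1*M')
        = ((3:ZMod n)^(p.1*M') + 3^(M + p.2*M')) * 3^M
    have e1 : (3:ZMod n)^(((p.2+1) % R')*M') = 3^((p.2+1)*M') := by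
      rw [Stmt7.pow3_mod h3n1 (((p.2+1) % R')*M'), Stmt7.pow3_mod h3n1 ((p.2+1)*M')]
      congr 1
      have : ((p.2+1) % R')*M' ≡ (p.2+1)*M' [MOD R'*M'] :=
        (Nat.mod_modEq (p.2+1) R').mul_right' M'
      rw [hR'M'] at this
      exact this
    rw [e1]
    have e2 : (p.2+1)*M' = (M + p.2*M') + M := by rw [hM'M]; ring
    have e3 : M + p.1*M' = p.1*M' + M := by ring
    rw [e2, e3, pow_add, pow_add, add_mul]
    ring
  -- the counting function
  set N : ℕ → ℕ := fun e => ((S'.filter (fun p => d p = e)).card) with hNdef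
  have hcancel : ∀ x y, x < n-1 → y < n-1 →
      (x + M) % (n-1) = (y + M) % (n-1) → x = y := by
    intro x y hx hy h
    have h1 : x + M ≡ y + M [MOD n-1] := h
    exact (Nat.ModEq.add_right_cancel' M h1).eq_of_lt_of_lt hx hy
  have hNshift : ∀ e, e < n-1 → N ((e + M) % (n-1)) = N e := by
    intro e he
    apply Finset.card_bij' (fun p _ => τf p) (fun p _ => σf p)
    · intro p hp
      have hp1 := Finset.mem_filter.mp hp
      refine Finset.mem_filter.mpr ⟨hτmem p hp1.1, ?_⟩
      apply hcancel _ _ (hdlt _) he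
      have h2 : d (σf (τf p)) = (d (τf p) + M) % (n-1) := hshift (τf p)
      rw [hστ p hp1.1] at h2
      rw [← h2, hp1.2]
    · intro p hp
      have hp1 := Finset.mem_filter.mp hp
      refine Finset.mem_filter.mpr ⟨hσmem p hp1.1, ?_⟩
      rw [hshift p, hp1.2]
    · intro p hp
      exact hστ p (Finset.mem_filter.mp hp).1
    · intro p hp
      exact hτσ p (Finset.mem_filter.mp hp).1
  have hNmod : ∀ e, e < n-1 → N e = N (e % M) := by
    intro e
    induction e using Nat.strong_induction_on with
    | _ e ih =>
      intro he
      rcases Nat.lt_or_ge e M with h | h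
      · rw [Nat.mod_eq_of_lt h]
      · have h1 : e - M < e := by omega
        have h2 : e - M < n - 1 := by omega
        have h3 : (e - M + M) % (n-1) = e := by
          rw [Nat.sub_add_cancel h, Nat.mod_eq_of_lt he]
        have h4 := hNshift (e - M) h2
        rw [h3] at h4
        rw [h4, ih (e-M) h1 h2]
        congr 1
        conv_rhs => rw [← Nat.sub_add_cancel h]
        rw [Nat.add_mod_right]
  -- provide the integers μ
  refine ⟨fun k => ((N (k-1) : ℕ) : ℤ), ?_⟩
  intro j hj1 hjM
  set c := j - 1 with hcdef
  -- left side as Qp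
  have hL1 : per n ν ng j M' = Stmt7.Qp n M' c :=
    Stmt7.per_eq_Qp n ν ng M' s u j hn2 h3n1 hs2 hsu hun hn1 hM'ng hM'0
  have hL2 : per n ν ng (j + M) M' = Stmt7.Qp n M' (c + M) := by
    rw [Stmt7.per_eq_Qp n ν ng M' s u (j+M) hn2 h3n1 hs2 hsu hun hn1 hM'ng hM'0]
    congr 1
    omega
  -- expand the product
  have hprod : Stmt7.Qp n M' c * Stmt7.Qp n M' (c + M)
      = ∑ p ∈ S', Stmt7.gf n (c + d p) := by
    unfold Stmt7.Qp
    rw [Finset.sum_mul_sum, hS'def, Finset.sum_product]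
    refine Finset.sum_congr rfl fun r hr => Finset.sum_congr rfl fun r' hr' => ?_
    unfold Stmt7.gf
    rw [← Stmt7.Fc_add (by omega : n ≠ 0)]
    congr 1
    have e0 : c + M + r' * M' = c + (M + r' * M') := by ring
    rw [e0, pow_add, pow_add, pow_add, ← mul_add,
      pow_add (3 : ZMod n) c (d (r, r'))]
    have hdd := hd (r, r')
    simp only at hdd
    rw [hdd, pow_add]
  -- fiberwise decomposition of the product sum
  have hfib : ∑ p ∈ S', Stmt7.gf n (c + d p)
      = ∑ e ∈ Finset.range (n-1), (N e : ℂ) * Stmt7.gf n (c + e) := by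
    rw [← Finset.sum_fiberwise_of_maps_to
      (fun p _ => Finset.mem_range.mpr (hdlt p)) (fun p => Stmt7.gf n (c + d p))]
    refine Finset.sum_congr rfl fun e he => ?_
    calc ∑ p ∈ S'.filter (fun p => d p = e), Stmt7.gf n (c + d p)
        = ∑ p ∈ S'.filter (fun p => d p = e), Stmt7.gf n (c + e) :=
          Finset.sum_congr rfl (fun p hp => by rw [(Finset.mem_filter.mp hp).2])
      _ = (N e : ℂ) * Stmt7.gf n (c + e) := by
          rw [Finset.sum_const, nsmul_eq_mul]
  -- reassemble the right side
  have hsplit : ∑ e ∈ Finset.range (n-1), (N (e % M) : ℂ) * Stmt7.gf n (c+e)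
      = ∑ p ∈ Finset.range M ×ˢ Finset.range R,
          (N p.1 : ℂ) * Stmt7.gf n (c + (p.1 + p.2 * M)) := by
    refine Finset.sum_nbij' (fun e => (e % M, e / M)) (fun p => p.1 + p.2 * M)
      ?_ ?_ ?_ ?_ ?_
    · intro e he
      simp only [Finset.mem_product, Finset.mem_range] at *
      refine ⟨Nat.mod_lt _ hM0, ?_⟩
      rw [Nat.div_lt_iff_lt_mul hM0, hRM]
      exact he
    · intro p hp
      simp only [Finset.mem_product, Finset.mem_range] at *
      have h1 : p.2 + 1 ≤ R := hp.2
      have h2 : (p.2+1)*M ≤ R*M := Nat.mul_le_mul_right M h1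
      have h3 : (p.2+1)*M = p.2*M + M := by ring
      omega
    · intro e he
      show (e % M) + (e / M) * M = e
      exact Nat.mod_add_div' e M
    · intro p hp
      simp only [Finset.mem_product, Finset.mem_range] at hp
      have h1 : (p.1 + p.2 * M) % M = p.1 := by
        rw [Nat.add_mul_mod_self_right, Nat.mod_eq_of_lt hp.1]
      have h2 : (p.1 + p.2 * M) / M = p.2 := by
        rw [Nat.add_mul_div_right _ _ hM0, Nat.div_eq_of_lt hp.1, zero_add]
      show ((p.1 + p.2*M) % M, (p.1 + p.2*M) / M) = p
      rw [h1, h2]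
    · intro e he
      have h1 : e % M + (e / M) * M = e := Nat.mod_add_div' e M
      simp only
      rw [h1]
  have hsplit2 : ∑ k ∈ Finset.range M, (N k : ℂ) * Stmt7.Qp n M (c + k)
      = ∑ p ∈ Finset.range M ×ˢ Finset.range R,
          (N p.1 : ℂ) * Stmt7.gf n (c + (p.1 + p.2 * M)) := by
    rw [Finset.sum_product]
    refine Finset.sum_congr rfl fun k hk => ?_
    unfold Stmt7.Qp
    rw [Finset.mul_sum]
    refine Finset.sum_congr rfl fun r hr => ?_
    congr 2
    ring
  have hreidx : ∑ k ∈ Finset.Icc 1 M, (N (k-1) : ℂ) * Stmt7.Qp n M (c + (k-1))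
      = ∑ k ∈ Finset.range M, (N k : ℂ) * Stmt7.Qp n M (c + k) := by
    refine Finset.sum_nbij' (fun k => k - 1) (fun k => k + 1) ?_ ?_ ?_ ?_ ?_
    · intro a ha
      simp only [Finset.mem_Icc] at ha
      simp only [Finset.mem_range]
      omega
    · intro a ha
      simp only [Finset.mem_range] at ha
      simp only [Finset.mem_Icc]
      omega
    · intro a ha
      simp only [Finset.mem_Icc] at ha
      show a - 1 + 1 = a
      omega
    · intro a ha
      show a + 1 - 1 = a
      omega
    · intro a ha
      rfl
  -- right side term conversion
  have hR1 : ∀ k, 1 ≤ k → k ≤ M →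
      per n ν ng (rho (k+j-1) M) M = Stmt7.Qp n M (c + (k-1)) := by
    intro k hk hkM
    rw [Stmt7.per_eq_Qp n ν ng M s u _ hn2 h3n1 hs2 hsu hun hn1 hMng hM0]
    set a := k + j - 1 with hadef
    have ha1 : 1 ≤ a := by omega
    have key : ∃ t, c + (k-1) = (rho a M - 1) + M * t := by
      have hceq : c + (k-1) = a - 1 := by omega
      rw [hceq]
      unfold rho
      by_cases hdvd : M ∣ a
      · rw [if_pos hdvd]
        obtain ⟨q, hq⟩ := hdvd
        have hq1 : 1 ≤ q := by
          rcases Nat.eq_zero_or_pos q with h|h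
          · rw [h, mul_zero] at hq; omega
          · exact h
        obtain ⟨q', rfl⟩ : ∃ q', q = q' + 1 := ⟨q-1, by omega⟩
        refine ⟨q', ?_⟩
        have : M * (q' + 1) = M * q' + M := by ring
        omega
      · rw [if_neg hdvd]
        have hmod0 : a % M ≠ 0 := by
          intro h
          exact hdvd (Nat.dvd_of_mod_eq_zero h)
        refine ⟨a / M, ?_⟩
        have hdm := Nat.div_add_mod a M
        set w := a % M with hw
        set q2 := a / M with hq2
        omega
    obtain ⟨t, ht⟩ := key
    rw [ht, Stmt7.Qp_add_mul h3n1 hn2 hMn1 hM0]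
  -- put everything together
  calc per n ν ng j M' * per n ν ng (j + M) M'
      = Stmt7.Qp n M' c * Stmt7.Qp n M' (c + M) := by rw [hL1, hL2]
    _ = ∑ p ∈ S', Stmt7.gf n (c + d p) := hprod
    _ = ∑ e ∈ Finset.range (n-1), (N e : ℂ) * Stmt7.gf n (c + e) := hfib
    _ = ∑ e ∈ Finset.range (n-1), (N (e % M) : ℂ) * Stmt7.gf n (c + e) :=
        Finset.sum_congr rfl (fun e he => by
          rw [← hNmod e (Finset.mem_range.mp he)])
    _ = ∑ k ∈ Finset.range M, (N k : ℂ) * Stmt7.Qp n M (c + k) := by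
        rw [hsplit2, hsplit]
    _ = ∑ k ∈ Finset.Icc 1 M, (N (k-1) : ℂ) * Stmt7.Qp n M (c + (k-1)) := hreidx.symm
    _ = ∑ k ∈ Finset.Icc 1 M,
          (((N (k-1) : ℕ) : ℤ) : ℂ) * per n ν ng (rho (k+j-1) M) M := by
        refine Finset.sum_congr rfl fun k hk => ?_
        have hk1 := Finset.mem_Icc.mp hk
        rw [hR1 k hk1.1 hk1.2]
        push_cast
        ring
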